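/- Let G be a finite connected simple graph with at least 5 vertices. Then there exist a proper coloring c of G and an up-color dominating c-set D of G such that 2·Σ_{v∈D} c(v) ≤ 3·(χ(G) − 1)·γ(G), i.e., the weight of D is at most (3/2)(χ(G) − 1)γ(G). -/
import Mathlib


/-- `D` is an up-color dominating `c`-set of `G`. -/
def IsUCDomSet {V : Type*} (G : SimpleGraph V) (c : V → ℕ) (D : Finset V) : Prop :=
  (∀ v ∉ D, ∃ d ∈ D, G.Adj v d ∧ c v < c d) ∧ ∀ d ∈ D, 1 ≤ c d

/-- `D` is a dominating set of `G`. -/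
def IsDomSet {V : Type*} (G : SimpleGraph V) (D : Finset V) : Prop :=
  ∀ v ∉ D, ∃ d ∈ D, G.Adj v d

/-- The domination number of `G`. -/
noncomputable def domNum (V : Type*) [Fintype V] (G : SimpleGraph V) : ℕ :=
  sInf {n | ∃ D : Finset V, IsDomSet G D ∧ D.card = n}

/-- The chromatic number of `G` (as a natural number). -/
noncomputable def chromNum {V : Type*} (G : SimpleGraph V) : ℕ :=
  sInf {n | G.Colorable n}

theorem stmt_16 {V : Type*} [Fintype V] (G : SimpleGraph V)
    (hconn : G.Connected) (hcard : 5 ≤ Fintype.card V) :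
    ∃ c : V → ℕ, (∀ ⦃u v⦄, G.Adj u v → c u ≠ c v) ∧
      ∃ D : Finset V, IsUCDomSet G c D ∧
        2 * ∑ v ∈ D, c v ≤ 3 * (chromNum G - 1) * domNum V G := by
  classical
  have hcol : G.Colorable (chromNum G) :=
    Nat.sInf_mem (⟨Fintype.card V, G.colorable_of_fintype⟩ :
      {n | G.Colorable n}.Nonempty)
  set k := chromNum G with hk
  -- there is an edge
  obtain ⟨u, v, huv0⟩ := Fintype.exists_pair_of_one_lt_card (α := V) (by omega)
  obtain ⟨w⟩ := hconn.preconnected u v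
  obtain ⟨a, b, hab⟩ : ∃ a b, G.Adj a b := by
    cases w with
    | nil => exact absurd rfl huv0
    | cons h _ => exact ⟨_, _, h⟩
  have hk2 : 2 ≤ k := by
    by_contra h
    push_neg at h
    obtain ⟨C⟩ := hcol.mono (show k ≤ 1 by omega)
    exact (C.valid hab) (Subsingleton.elim (C a) (C b))
  haveI : NeZero k := ⟨by omega⟩
  obtain ⟨c0⟩ := hcol
  -- a minimum dominating set
  have hdom : domNum V G ∈ {n | ∃ D : Finset V, IsDomSet G D ∧ D.card = n} := by
    apply Nat.sInf_mem
    exact ⟨Fintype.card V, Finset.univ,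
      fun v hv => absurd (Finset.mem_univ v) hv, Finset.card_univ⟩
  obtain ⟨S, hS, hScard⟩ := hdom
  set γ := domNum V G with hγ
  set e := k - 1 with he
  have hke : k = e + 1 := by omega
  -- family of colorings parametrized by a cyclic shift
  set ρ : Fin k → V → ℕ := fun t v => ((c0 v + t : Fin k) : ℕ) with hρ
  set cf : Fin k → V → ℕ :=
    fun t v => if v ∈ S ∧ ρ t v ≠ e then k + ρ t v else ρ t v with hcf
  have hρlt : ∀ t v, ρ t v < k := fun t v => (c0 v + t).isLt
  have hρadj : ∀ (t : Fin k) {x y}, G.Adj x y → ρ t x ≠ ρ t y := by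
    intro t x y hxy h
    exact (c0.valid hxy) (add_right_cancel (Fin.ext h : c0 x + t = c0 y + t))
  -- the key averaging computation
  have hsum1 : ∀ d ∈ S, 2 * ∑ t : Fin k, cf t d = 3 * k * e := by
    intro d hd
    have hcong : ∀ t : Fin k, cf t d =
        (fun i : Fin k => if (i : ℕ) ≠ e then k + (i : ℕ) else (i : ℕ)) (c0 d + t) := by
      intro t
      simp only [hcf, hρ, hd, true_and]
    rw [Finset.sum_congr rfl (fun t _ => hcong t)]
    have hbij : ∑ t : Fin k, (fun i : Fin k =>
        if (i : ℕ) ≠ e then k + (i : ℕ) else (i : ℕ)) (c0 d + t)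
        = ∑ i : Fin k, (if (i : ℕ) ≠ e then k + (i : ℕ) else (i : ℕ)) :=
      Fintype.sum_equiv (Equiv.addLeft (c0 d)) _ _ (fun t => rfl)
    rw [hbij]
    set A := ∑ i : Fin k, (if (i : ℕ) ≠ e then k + (i : ℕ) else (i : ℕ)) with hA
    have hlast : ∀ i : Fin k,
        (if (i : ℕ) ≠ e then k + (i : ℕ) else (i : ℕ))
          + (if i = (⟨e, by omega⟩ : Fin k) then k else 0) = k + (i : ℕ) := by
      intro i
      by_cases hie : i = (⟨e, by omega⟩ : Fin k)
      · subst hie; simp [Nat.add_comm]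
      · have : (i : ℕ) ≠ e := fun h => hie (Fin.ext h)
        simp [this, hie]
    have hsplit : A + k = ∑ i : Fin k, (k + (i : ℕ)) := by
      rw [← Finset.sum_congr rfl (fun i _ => hlast i), Finset.sum_add_distrib]
      simp [hA]
    have hsum2 : ∑ i : Fin k, (k + (i : ℕ)) = k * k + ∑ i ∈ Finset.range k, i := by
      rw [Finset.sum_add_distrib, Finset.sum_const, Finset.card_univ, Fintype.card_fin,
        smul_eq_mul, Fin.sum_univ_eq_sum_range (fun i => i) k]
    have hgauss : (∑ i ∈ Finset.range k, i) * 2 = k * (k - 1) :=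
      Finset.sum_range_id_mul_two k
    set R := ∑ i ∈ Finset.range k, i with hR
    have h1 : A + k = k * k + R := by rw [hsplit, hsum2]
    have h2 : R * 2 = k * e := by rw [hgauss, he]
    have hkk : k * k = e * e + 2 * e + 1 := by rw [hke]; ring
    have hke2 : k * e = e * e + e := by rw [hke]; ring
    have h3 : 3 * k * e = 3 * (e * e) + 3 * e := by rw [hke]; ring
    rw [h3]
    have h1' : A + (e + 1) = e * e + 2 * e + 1 + R := by
      rw [← hkk, ← hke, h1]
    have h2' : R * 2 = e * e + e := by rw [h2, hke2]
    linarith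
  -- choose a good shift
  have htotal : ∑ t : Fin k, (2 * ∑ v ∈ S, cf t v) = ∑ t : Fin k, 3 * e * γ := by
    have : ∑ t : Fin k, (2 * ∑ v ∈ S, cf t v)
        = ∑ v ∈ S, (2 * ∑ t : Fin k, cf t v) := by
      rw [← Finset.mul_sum, ← Finset.mul_sum, Finset.sum_comm]
    rw [this, Finset.sum_congr rfl hsum1, Finset.sum_const, Finset.sum_const,
      Finset.card_univ, Fintype.card_fin, hScard, smul_eq_mul, smul_eq_mul]
    ring
  obtain ⟨t, -, ht⟩ := Finset.exists_le_of_sum_le (Finset.univ_nonempty (α := Fin k)) htotal.le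
  -- the chosen coloring works
  refine ⟨cf t, ?_, S, ⟨?_, ?_⟩, ?_⟩
  · intro x y hxy
    have h1 := hρadj t hxy
    have h2 := hρlt t x
    have h3 := hρlt t y
    simp only [hcf]
    split_ifs <;> omega
  · intro v hv
    obtain ⟨d, hdS, hadj⟩ := hS v hv
    refine ⟨d, hdS, hadj, ?_⟩
    have h1 := hρadj t hadj
    have h2 := hρlt t v
    have h3 := hρlt t d
    simp only [hcf, hv, false_and, if_false]
    split_ifs with h
    · omega
    · push_neg at h
      have := h hdS
      omega
  · intro d hd
    have h3 := hρlt t d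
    simp only [hcf]
    split_ifs with h
    · omega
    · push_neg at h
      have := h hd
      omega
  · calc 2 * ∑ v ∈ S, cf t v ≤ 3 * e * γ := ht
    _ = 3 * (chromNum G - 1) * domNum V G := by rw [he, ← hγ, ← hk]
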